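/- Let r ∈ ℝ^d satisfy gᵀr + (1/2)·rᵀHr ≥ c. Then ‖r‖ ≥ (‖g‖/ν)·(√(1 + 2νc/‖g‖²) − 1). (Lower bound of Theorem 1: every perturbation that fools the quadratically-approximated classifier has Euclidean norm at least this value.) -/

import Mathlib

open Matrix

/-- Lower bound of Theorem 1: every perturbation `r` fooling the quadratically-approximated
classifier (`gᵀr + (1/2)·rᵀHr ≥ c`) has Euclidean norm at least
`(‖g‖/ν)·(√(1 + 2νc/‖g‖²) − 1)`. -/
theorem lower_bound_robustness {d : ℕ} (H : Matrix (Fin d) (Fin d) ℝ) (hH : H.IsSymm)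
    (ν : ℝ) (hν : 0 < ν)
    (hray : ∀ r : EuclideanSpace ℝ (Fin d), r ⬝ᵥ H.mulVec r ≤ ν * ‖r‖ ^ 2)
    (g : EuclideanSpace ℝ (Fin d)) (hg : g ≠ 0) (c : ℝ) (hc : 0 ≤ c)
    (r : EuclideanSpace ℝ (Fin d))
    (hr : g ⬝ᵥ r + (1 / 2) * (r ⬝ᵥ H.mulVec r) ≥ c) :
    ‖g‖ / ν * (Real.sqrt (1 + 2 * ν * c / ‖g‖ ^ 2) - 1) ≤ ‖r‖ := by
  have hG : 0 < ‖g‖ := norm_pos_iff.mpr hg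
  have hx : 0 ≤ ‖r‖ := norm_nonneg r
  have hdot : g ⬝ᵥ r = inner ℝ g r := by
    simp [dotProduct, PiLp.inner_apply, RCLike.inner_apply, mul_comm]
  have hcs : g ⬝ᵥ r ≤ ‖g‖ * ‖r‖ := by
    rw [hdot]
    exact real_inner_le_norm g r
  have key : c ≤ ‖g‖ * ‖r‖ + ν / 2 * ‖r‖ ^ 2 := by
    have := hray r
    nlinarith [hr]
  -- show sqrt term bound
  have hsq : Real.sqrt (1 + 2 * ν * c / ‖g‖ ^ 2) ≤ 1 + ν * ‖r‖ / ‖g‖ := by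
    rw [show (1 + ν * ‖r‖ / ‖g‖) = Real.sqrt ((1 + ν * ‖r‖ / ‖g‖) ^ 2) from
      (Real.sqrt_sq (by positivity)).symm]
    apply Real.sqrt_le_sqrt
    have h1 : 0 < ‖g‖ ^ 2 := by positivity
    have h2 : (1 + ν * ‖r‖ / ‖g‖) ^ 2
        = 1 + (2 * ν * (‖g‖ * ‖r‖) + ν ^ 2 * ‖r‖ ^ 2) / ‖g‖ ^ 2 := by
      field_simp; ring
    rw [h2]
    gcongr ?_ + ?_ / _
    · rfl
    nlinarith [key, hν]
  calc ‖g‖ / ν * (Real.sqrt (1 + 2 * ν * c / ‖g‖ ^ 2) - 1)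
      ≤ ‖g‖ / ν * ((1 + ν * ‖r‖ / ‖g‖) - 1) := by
        apply mul_le_mul_of_nonneg_left (by linarith) (by positivity)
    _ = ‖r‖ := by field_simp; ring
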